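/- The maximal value of the upper Birkhoff scaling exponent is log(3/2)/log(2): that is, max over x ∈ [0,1] of limsup_{n→∞} ψ_n(x)/(n log 2) equals log(3/2)/log(2), and this maximum is attained at x = 1/3 and x = 2/3. -/

import Mathlib

noncomputable def psi (x : ℝ) : ℝ := Real.log (1 - Real.cos (2 * Real.pi * x))

noncomputable def psiSum (n : ℕ) (x : ℝ) : ℝ :=
  ∑ ℓ ∈ Finset.range n, psi (Int.fract ((2:ℝ) ^ ℓ * x))

/-- The scaling exponent `limsup_n ψ_n(x)/(n log 2)`. -/
noncomputable def scalingExp (x : ℝ) : ℝ :=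
  Filter.limsup (fun n : ℕ => psiSum n x / (n * Real.log 2)) Filter.atTop

open Filter Real

lemma psi_fract (y : ℝ) : psi (Int.fract y) = Real.log (1 - Real.cos (2 * Real.pi * y)) := by
  unfold psi
  congr 2
  rw [Int.fract]
  have : 2 * π * (y - ⌊y⌋) = 2 * π * y - (⌊y⌋ : ℝ) * (2 * π) := by ring
  rw [this, Real.cos_sub_int_mul_two_pi]

lemma psiSum_eq (n : ℕ) (x : ℝ) :
    psiSum n x = ∑ ℓ ∈ Finset.range n, Real.log (1 - Real.cos (2 * Real.pi * (2 ^ ℓ * x))) := by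
  unfold psiSum
  exact Finset.sum_congr rfl fun ℓ _ => psi_fract _

lemma limsup_le_aux (f : ℕ → ℝ) (L : ℝ) (hL : 0 ≤ L)
    (h : ∀ ε > 0, ∀ᶠ n in atTop, f n ≤ L + ε) : Filter.limsup f atTop ≤ L := by
  rw [Filter.limsup_eq]
  by_cases hb : BddBelow {a | ∀ᶠ n in atTop, f n ≤ a}
  · refine le_of_forall_pos_le_add fun ε hε => ?_
    exact csInf_le hb (h ε hε)
  · rw [Real.sInf_of_not_bddBelow hb]; exact hL

lemma cos_double_step (ℓ : ℕ) (x : ℝ) :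
    Real.cos (2 * π * (2 ^ (ℓ+1) * x)) = 2 * Real.cos (2 * π * (2 ^ ℓ * x)) ^ 2 - 1 := by
  have : 2 * π * (2 ^ (ℓ+1) * x) = 2 * (2 * π * (2 ^ ℓ * x)) := by ring
  rw [this, Real.cos_two_mul]

lemma cube_ineq (b : ℝ) (hb : 0 < b) : b ^ 2 * (2 * b * (2 - b)) ≤ 27/8 := by
  nlinarith [sq_nonneg (2*b-3), sq_nonneg (b*(2*b-3)), hb.le,
    mul_nonneg hb.le (sq_nonneg (2*b-3))]

section main

variable {x : ℝ}

/-- Main bound for non-dyadic points. -/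
lemma psiSum_le (hx : ∀ ℓ : ℕ, Real.cos (2 * π * (2 ^ ℓ * x)) ≠ 1) (n : ℕ) :
    psiSum n x ≤ n * Real.log (3/2) + (1/3 + Real.log 2 / 3 + Real.log 2) := by
  classical
  set a : ℕ → ℝ := fun ℓ => 1 - Real.cos (2 * π * (2 ^ ℓ * x)) with ha_def
  have hS : ∀ m : ℕ, psiSum m x = ∑ ℓ ∈ Finset.range m, Real.log (a ℓ) := fun m => psiSum_eq m x
  have harec : ∀ ℓ, a (ℓ+1) = 2 * a ℓ * (2 - a ℓ) := by
    intro ℓ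
    simp only [ha_def]
    rw [cos_double_step]
    ring
  have ha0 : ∀ ℓ, 0 < a ℓ := by
    intro ℓ
    have h1 := Real.cos_le_one (2 * π * (2 ^ ℓ * x))
    have h2 := hx ℓ
    simp only [ha_def]
    rcases lt_or_eq_of_le h1 with h | h
    · linarith
    · exact absurd h h2
  have ha2 : ∀ ℓ, a ℓ < 2 := by
    intro ℓ
    have h1 := ha0 (ℓ+1)
    rw [harec ℓ] at h1
    have h0 := ha0 ℓ
    nlinarith
  have t_nonneg : (0:ℝ) ≤ Real.log (3/2) := Real.log_nonneg (by norm_num)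
  have log2_pos : (0:ℝ) < Real.log 2 := Real.log_pos (by norm_num)
  have hla : ∀ ℓ, Real.log (a ℓ) ≤ Real.log 2 := fun ℓ =>
    Real.log_le_log (ha0 ℓ) (ha2 ℓ).le
  -- key inequality
  have key : ∀ ℓ, Real.log (a ℓ) + Real.log (a (ℓ+1)) / 2 ≤ 3/2 * Real.log (3/2) := by
    intro ℓ
    have hpos : 0 < a ℓ := ha0 ℓ
    have hpos' : 0 < a (ℓ+1) := ha0 (ℓ+1)
    have hpoly : a ℓ ^ 2 * a (ℓ+1) ≤ 27/8 := by
      rw [harec]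
      exact cube_ineq (a ℓ) hpos
    have h2 : Real.log (a ℓ ^ 2 * a (ℓ+1)) ≤ Real.log (27/8) := by
      apply Real.log_le_log (by positivity) hpoly
    rw [Real.log_mul (by positivity) hpos'.ne', Real.log_pow] at h2
    have h3 : Real.log (27/8) = 3 * Real.log (3/2) := by
      rw [show (27:ℝ)/8 = (3/2)^3 by norm_num, Real.log_pow]
      norm_num
    rw [h3] at h2
    push_cast at h2
    linarith
  -- telescoped bound
  have tele : ∀ m : ℕ, ∑ ℓ ∈ Finset.range m, Real.log (a ℓ) ≤
      m * Real.log (3/2) + (Real.log (a 0) - Real.log (a m)) / 3 := by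
    intro m
    induction m with
    | zero => simp
    | succ m ih =>
      rw [Finset.sum_range_succ]
      have := key m
      push_cast
      linarith
  -- main argument
  rcases n with _ | N
  · simp [hS]
    positivity
  by_cases hg : ∃ ℓ, ℓ ≤ N ∧ -1 ≤ Real.log (a ℓ)
  · obtain ⟨ℓ₀, hℓ₀, hP⟩ := hg
    set P : ℕ → Prop := fun ℓ => -1 ≤ Real.log (a ℓ) with hP_def
    set m := Nat.findGreatest P N with hm_def
    have hm : P m := Nat.findGreatest_spec hℓ₀ hP
    have hmN : m ≤ N := Nat.findGreatest_le N
    have hgt : ∀ k, m < k → k ≤ N → Real.log (a k) < -1 := fun k h1 h2 =>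
      not_le.mp (Nat.findGreatest_is_greatest h1 h2)
    have hsplit : ∑ ℓ ∈ Finset.range (N+1), Real.log (a ℓ) =
        (∑ ℓ ∈ Finset.range m, Real.log (a ℓ)) + Real.log (a m) +
        ∑ ℓ ∈ Finset.Ico (m+1) (N+1), Real.log (a ℓ) := by
      rw [Finset.range_eq_Ico, ← Finset.sum_Ico_consecutive _ (Nat.zero_le m)
        (by omega : m ≤ N+1), ← Finset.sum_Ico_consecutive _ (by omega : m ≤ m+1)
        (by omega : m+1 ≤ N+1)]
      rw [Finset.sum_Ico_succ_top (le_refl m), Finset.Ico_self, Finset.sum_empty, zero_add]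
      rw [← Finset.range_eq_Ico]
      ring
    have htail : ∑ ℓ ∈ Finset.Ico (m+1) (N+1), Real.log (a ℓ) ≤ 0 := by
      apply Finset.sum_nonpos
      intro k hk
      rw [Finset.mem_Ico] at hk
      have := hgt k (by omega) (by omega)
      linarith
    have h1 := tele m
    have h2 := hla 0
    have h3 := hla m
    have hm' : -1 ≤ Real.log (a m) := hm
    rw [hS, hsplit]
    have hcast : (m:ℝ) ≤ (N:ℝ) + 1 := by exact_mod_cast Nat.le_succ_of_le hmN
    have hmt : (m:ℝ) * Real.log (3/2) ≤ ((N:ℝ)+1) * Real.log (3/2) :=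
      mul_le_mul_of_nonneg_right hcast t_nonneg
    push_cast
    linarith
  · push_neg at hg
    rw [hS]
    have hsum : ∑ ℓ ∈ Finset.range (N+1), Real.log (a ℓ) ≤ 0 := by
      apply Finset.sum_nonpos
      intro k hk
      rw [Finset.mem_range] at hk
      have := hg k (by omega)
      linarith
    have : (0:ℝ) ≤ ((N:ℝ)+1) * Real.log (3/2) + (1/3 + Real.log 2/3 + Real.log 2) := by
      positivity
    push_cast
    linarith

end main

lemma scalingExp_le (x : ℝ) : scalingExp x ≤ Real.log (3/2) / Real.log 2 := by
  have log2_pos : (0:ℝ) < Real.log 2 := Real.log_pos (by norm_num)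
  have t_nonneg : (0:ℝ) ≤ Real.log (3/2) := Real.log_nonneg (by norm_num)
  have hL : (0:ℝ) ≤ Real.log (3/2) / Real.log 2 := div_nonneg t_nonneg log2_pos.le
  by_cases hx : ∀ ℓ : ℕ, Real.cos (2 * Real.pi * (2 ^ ℓ * x)) ≠ 1
  · apply limsup_le_aux _ _ hL
    intro ε hε
    rw [Filter.eventually_atTop]
    refine ⟨max 1 ⌈(1/3 + Real.log 2 / 3 + Real.log 2) / (ε * Real.log 2)⌉₊, fun n hn => ?_⟩
    have hn1 : 1 ≤ n := le_trans (le_max_left _ _) hn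
    have hn2 : (⌈(1/3 + Real.log 2 / 3 + Real.log 2) / (ε * Real.log 2)⌉₊ : ℝ) ≤ n := by
      exact_mod_cast le_trans (le_max_right _ _) hn
    have hnC : 1/3 + Real.log 2 / 3 + Real.log 2 ≤ ε * (n * Real.log 2) := by
      have h1 : (1/3 + Real.log 2 / 3 + Real.log 2) / (ε * Real.log 2) ≤ (n:ℝ) :=
        le_trans (Nat.le_ceil _) hn2
      have h2 : 0 < ε * Real.log 2 := by positivity
      rw [div_le_iff₀ h2] at h1
      nlinarith
    have hnpos : (0:ℝ) < n * Real.log 2 := by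
      have : (0:ℝ) < (n:ℝ) := by exact_mod_cast hn1
      positivity
    rw [div_le_iff₀ hnpos]
    have hb := psiSum_le hx n
    have heq : (Real.log (3/2) / Real.log 2 + ε) * (n * Real.log 2)
        = n * Real.log (3/2) + ε * (n * Real.log 2) := by
      field_simp
    rw [heq]
    linarith
  · -- dyadic case
    push_neg at hx
    obtain ⟨m, hm⟩ := hx
    have hcos : ∀ k, Real.cos (2 * Real.pi * (2 ^ (m+k) * x)) = 1 := by
      intro k
      induction k with
      | zero => simpa using hm
      | succ k ih =>
        have : m + (k+1) = (m+k) + 1 := by omega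
        rw [this, cos_double_step, ih]
        norm_num
    have hstable : ∀ n, m ≤ n → psiSum n x = psiSum m x := by
      intro n hn
      rw [psiSum_eq, psiSum_eq]
      rw [Finset.range_eq_Ico, ← Finset.sum_Ico_consecutive _ (Nat.zero_le m) hn,
        ← Finset.range_eq_Ico]
      have : ∑ ℓ ∈ Finset.Ico m n, Real.log (1 - Real.cos (2 * Real.pi * (2 ^ ℓ * x))) = 0 := by
        apply Finset.sum_eq_zero
        intro k hk
        rw [Finset.mem_Ico] at hk
        obtain ⟨j, rfl⟩ := Nat.exists_eq_add_of_le hk.1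
        rw [hcos j]
        simp
      rw [this, add_zero]
    have htend : Filter.Tendsto (fun n : ℕ => psiSum n x / (n * Real.log 2)) Filter.atTop
        (nhds 0) := by
      have h1 : Filter.Tendsto (fun n : ℕ => psiSum m x / (n * Real.log 2)) Filter.atTop
          (nhds 0) := by
        apply Filter.Tendsto.div_atTop tendsto_const_nhds
        exact tendsto_natCast_atTop_atTop.atTop_mul_const log2_pos
      apply h1.congr'
      rw [Filter.EventuallyEq, Filter.eventually_atTop]
      exact ⟨m, fun n hn => by rw [hstable n hn]⟩
    rw [scalingExp, htend.limsup_eq]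
    exact hL

lemma scalingExp_third (x : ℝ) (hcos0 : Real.cos (2 * Real.pi * ((2:ℝ) ^ (0:ℕ) * x)) = -1/2) :
    scalingExp x = Real.log (3/2) / Real.log 2 := by
  have log2_pos : (0:ℝ) < Real.log 2 := Real.log_pos (by norm_num)
  have hcos : ∀ ℓ : ℕ, Real.cos (2 * Real.pi * (2 ^ ℓ * x)) = -1/2 := by
    intro ℓ
    induction ℓ with
    | zero => exact hcos0
    | succ ℓ ih => rw [cos_double_step, ih]; norm_num
  have hsum : ∀ n : ℕ, psiSum n x = n * Real.log (3/2) := by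
    intro n
    rw [psiSum_eq]
    have : ∀ ℓ ∈ Finset.range n, Real.log (1 - Real.cos (2 * Real.pi * (2 ^ ℓ * x)))
        = Real.log (3/2) := by
      intro ℓ _
      rw [hcos ℓ]
      norm_num
    rw [Finset.sum_congr rfl this]
    simp [mul_comm]
  have htend : Filter.Tendsto (fun n : ℕ => psiSum n x / (n * Real.log 2)) Filter.atTop
      (nhds (Real.log (3/2) / Real.log 2)) := by
    apply Filter.Tendsto.congr' _ tendsto_const_nhds
    rw [Filter.EventuallyEq, Filter.eventually_atTop]
    refine ⟨1, fun n hn => ?_⟩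
    have hnpos : (0:ℝ) < (n:ℝ) := by exact_mod_cast hn
    rw [hsum n]
    field_simp
  rw [scalingExp, htend.limsup_eq]

theorem max_scaling_exponent :
    (∀ x ∈ Set.Icc (0:ℝ) 1, scalingExp x ≤ Real.log (3/2) / Real.log 2) ∧
    scalingExp (1/3) = Real.log (3/2) / Real.log 2 ∧
    scalingExp (2/3) = Real.log (3/2) / Real.log 2 := by
  refine ⟨fun x _ => scalingExp_le x, ?_, ?_⟩
  · apply scalingExp_third
    have : 2 * Real.pi * ((2:ℝ) ^ (0:ℕ) * (1/3)) = Real.pi - Real.pi / 3 := by ring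
    rw [this, Real.cos_pi_sub, Real.cos_pi_div_three]
    norm_num
  · apply scalingExp_third
    have : 2 * Real.pi * ((2:ℝ) ^ (0:ℕ) * (2/3)) = 2 * (Real.pi - Real.pi / 3) := by ring
    rw [this, Real.cos_two_mul, Real.cos_pi_sub, Real.cos_pi_div_three]
    norm_num
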